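/- Fix a nonempty finite set 𝒳, full-support probability distributions P1 ≠ P2 on 𝒳, r > 0, θ ∈ (0,1/2) and ζ ∈ (0,1−2θ). Then the function g1(α) = GJS( (ζ·P1 + (1−α)·P2)/(1−α+ζ), P2, (1−α+ζ)/r ) is monotonically nondecreasing in α on the interval [θ+ζ, 1−θ]. -/

import Mathlib

namespace StmtNS

variable {X : Type*} [Fintype X]

/-- `P` is a probability distribution on the finite set `X`. -/
def IsProbDist (P : X → ℝ) : Prop := (∀ x, 0 ≤ P x) ∧ (∑ x, P x) = 1

/-- Kullback–Leibler divergence `D(P‖Q) = ∑_{x : P(x) > 0} P(x) log (P(x)/Q(x))`. -/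
noncomputable def KL (P Q : X → ℝ) : ℝ :=
  ∑ x, if 0 < P x then P x * Real.log (P x / Q x) else 0

/-- Generalized Jensen–Shannon divergence. -/
noncomputable def GJS (Q Qt : X → ℝ) (a : ℝ) : ℝ :=
  a * KL Q (fun x => (a * Q x + Qt x) / (a + 1)) +
    KL Qt (fun x => (a * Q x + Qt x) / (a + 1))

/-- Gibbs' inequality. -/
lemma gibbs_aux (p q : X → ℝ) (hp : ∀ x, 0 < p x) (hq : ∀ x, 0 < q x)
    (hps : ∑ x, p x = 1) (hqs : ∑ x, q x = 1) :
    ∑ x, p x * Real.log (q x) ≤ ∑ x, p x * Real.log (p x) := by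
  have h : ∑ x, (p x * Real.log (q x) - p x * Real.log (p x)) ≤ ∑ x, (q x - p x) := by
    apply Finset.sum_le_sum
    intro x _
    have hlog : Real.log (q x) - Real.log (p x) = Real.log (q x / p x) :=
      (Real.log_div (hq x).ne' (hp x).ne').symm
    have h2 : Real.log (q x / p x) ≤ q x / p x - 1 :=
      Real.log_le_sub_one_of_pos (div_pos (hq x) (hp x))
    have h3 : p x * (Real.log (q x) - Real.log (p x)) ≤ p x * (q x / p x - 1) := by
      rw [hlog]; exact mul_le_mul_of_nonneg_left h2 (hp x).le
    have h4 : p x * (q x / p x - 1) = q x - p x := by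
      field_simp [(hp x).ne']
    calc p x * Real.log (q x) - p x * Real.log (p x)
        = p x * (Real.log (q x) - Real.log (p x)) := by ring
      _ ≤ p x * (q x / p x - 1) := h3
      _ = q x - p x := h4
  rw [Finset.sum_sub_distrib, Finset.sum_sub_distrib, hps, hqs] at h
  linarith

/-- Key inequality: moving the second argument of a cross entropy towards `p`
along a segment decreases it. -/
lemma jensen_key (p q m : X → ℝ) (hp : ∀ x, 0 < p x) (hq : ∀ x, 0 < q x)
    (hps : ∑ x, p x = 1) (hqs : ∑ x, q x = 1)
    (lam : ℝ) (hl0 : 0 ≤ lam) (hl1 : lam ≤ 1)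
    (hm : ∀ x, m x = lam * q x + (1 - lam) * p x) :
    ∑ x, p x * Real.log (q x) ≤ ∑ x, p x * Real.log (m x) := by
  have hgibbs := gibbs_aux p q hp hq hps hqs
  have hconc : ∀ x, lam * Real.log (q x) + (1 - lam) * Real.log (p x) ≤ Real.log (m x) := by
    intro x
    have h := strictConcaveOn_log_Ioi.concaveOn.2 (Set.mem_Ioi.2 (hq x))
      (Set.mem_Ioi.2 (hp x)) hl0 (by linarith : (0:ℝ) ≤ 1 - lam)
      (by ring : lam + (1 - lam) = 1)
    rw [hm x]
    simpa using h
  have h1 : ∑ x, p x * (lam * Real.log (q x) + (1 - lam) * Real.log (p x))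
      ≤ ∑ x, p x * Real.log (m x) :=
    Finset.sum_le_sum fun x _ => mul_le_mul_of_nonneg_left (hconc x) (hp x).le
  have h2 : ∑ x, p x * (lam * Real.log (q x) + (1 - lam) * Real.log (p x))
      = lam * (∑ x, p x * Real.log (q x)) + (1 - lam) * (∑ x, p x * Real.log (p x)) := by
    rw [Finset.mul_sum, Finset.mul_sum, ← Finset.sum_add_distrib]
    exact Finset.sum_congr rfl fun x _ => by ring
  nlinarith [mul_nonneg (by linarith : (0:ℝ) ≤ 1 - lam) (sub_nonneg.2 hgibbs)]

/-- Smooth reformulation of `g1`. -/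
noncomputable def Gf (P1 P2 : X → ℝ) (r ζ α : ℝ) : ℝ :=
  (1/r) * ((∑ x, (ζ * P1 x + (1 - α) * P2 x) * Real.log (ζ * P1 x + (1 - α) * P2 x))
    - (1 - α + ζ) * Real.log (1 - α + ζ)
    - (∑ x, (ζ * P1 x + (1 - α + r) * P2 x) * Real.log (ζ * P1 x + (1 - α + r) * P2 x))
    + (1 - α + ζ + r) * Real.log (1 - α + ζ + r))
  + ∑ x, P2 x * Real.log (P2 x)

lemma gjs_eq (P1 P2 : X → ℝ) (hP1s : ∑ x, P1 x = 1) (hP2s : ∑ x, P2 x = 1)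
    (hP1pos : ∀ x, 0 < P1 x) (hP2pos : ∀ x, 0 < P2 x)
    {r ζ α : ℝ} (hr : 0 < r) (hζ : 0 < ζ) (h1α : 0 < 1 - α) :
    GJS (fun x => (ζ * P1 x + (1 - α) * P2 x) / (1 - α + ζ)) P2 ((1 - α + ζ) / r)
      = Gf P1 P2 r ζ α := by
  have hβ : 0 < 1 - α + ζ := by linarith
  have hβr : 0 < 1 - α + ζ + r := by linarith
  have hu : ∀ x, 0 < ζ * P1 x + (1 - α) * P2 x :=
    fun x => add_pos (mul_pos hζ (hP1pos x)) (mul_pos h1α (hP2pos x))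
  have hv : ∀ x, 0 < ζ * P1 x + (1 - α + r) * P2 x :=
    fun x => add_pos (mul_pos hζ (hP1pos x)) (mul_pos (by linarith) (hP2pos x))
  have hM : ∀ x : X, ((1 - α + ζ) / r * ((ζ * P1 x + (1 - α) * P2 x) / (1 - α + ζ)) + P2 x)
      / ((1 - α + ζ) / r + 1)
      = (ζ * P1 x + (1 - α + r) * P2 x) / (1 - α + ζ + r) := by
    intro x
    field_simp
    ring
  have hQpos : ∀ x : X, 0 < (ζ * P1 x + (1 - α) * P2 x) / (1 - α + ζ) :=
    fun x => div_pos (hu x) hβ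
  have hsumu : ∑ x, (ζ * P1 x + (1 - α) * P2 x) = 1 - α + ζ := by
    rw [Finset.sum_add_distrib, ← Finset.mul_sum, ← Finset.mul_sum, hP1s, hP2s]; ring
  simp only [GJS, KL]
  have e1 : (∑ x, if 0 < (ζ * P1 x + (1 - α) * P2 x) / (1 - α + ζ) then
        (ζ * P1 x + (1 - α) * P2 x) / (1 - α + ζ) *
          Real.log ((ζ * P1 x + (1 - α) * P2 x) / (1 - α + ζ) /
            (((1 - α + ζ) / r * ((ζ * P1 x + (1 - α) * P2 x) / (1 - α + ζ)) + P2 x) /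
              ((1 - α + ζ) / r + 1)))
      else 0)
      = ∑ x, (ζ * P1 x + (1 - α) * P2 x) / (1 - α + ζ) *
          ((Real.log (ζ * P1 x + (1 - α) * P2 x) - Real.log (1 - α + ζ)) -
           (Real.log (ζ * P1 x + (1 - α + r) * P2 x) - Real.log (1 - α + ζ + r))) := by
    apply Finset.sum_congr rfl
    intro x _
    rw [if_pos (hQpos x), hM x, Real.log_div (hQpos x).ne' (div_pos (hv x) hβr).ne',
        Real.log_div (hu x).ne' hβ.ne', Real.log_div (hv x).ne' hβr.ne']
  have e2 : (∑ x, if 0 < P2 x then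
        P2 x * Real.log (P2 x /
            (((1 - α + ζ) / r * ((ζ * P1 x + (1 - α) * P2 x) / (1 - α + ζ)) + P2 x) /
              ((1 - α + ζ) / r + 1)))
      else 0)
      = ∑ x, P2 x * (Real.log (P2 x) -
           (Real.log (ζ * P1 x + (1 - α + r) * P2 x) - Real.log (1 - α + ζ + r))) := by
    apply Finset.sum_congr rfl
    intro x _
    rw [if_pos (hP2pos x), hM x, Real.log_div (hP2pos x).ne' (div_pos (hv x) hβr).ne',
        Real.log_div (hv x).ne' hβr.ne']
  rw [e1, e2]
  unfold Gf
  have gβ : (1 - α + ζ) * Real.log (1 - α + ζ)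
      = ∑ x, (ζ * P1 x + (1 - α) * P2 x) * Real.log (1 - α + ζ) := by
    rw [← Finset.sum_mul, hsumu]
  have hsumv : ∑ x, ((ζ * P1 x + (1 - α) * P2 x) + r * P2 x) = 1 - α + ζ + r := by
    rw [Finset.sum_add_distrib, hsumu, ← Finset.mul_sum, hP2s]; ring
  have gβr : (1 - α + ζ + r) * Real.log (1 - α + ζ + r)
      = ∑ x, ((ζ * P1 x + (1 - α) * P2 x) + r * P2 x) * Real.log (1 - α + ζ + r) := by
    rw [← Finset.sum_mul, hsumv]
  rw [gβ, gβr, Finset.mul_sum, ← Finset.sum_add_distrib, ← Finset.sum_sub_distrib,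
    ← Finset.sum_sub_distrib, ← Finset.sum_add_distrib, Finset.mul_sum,
    ← Finset.sum_add_distrib]
  apply Finset.sum_congr rfl
  intro x _
  field_simp
  ring

lemma hasDerivAt_Gf (P1 P2 : X → ℝ) (hP1pos : ∀ x, 0 < P1 x) (hP2pos : ∀ x, 0 < P2 x)
    {r ζ α : ℝ} (hr : 0 < r) (hζ : 0 < ζ) (h1α : 0 < 1 - α) (hP2s : ∑ x, P2 x = 1) :
    HasDerivAt (Gf P1 P2 r ζ)
      ((1/r) * ((∑ x, P2 x * Real.log (ζ * P1 x + (1 - α + r) * P2 x))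
        - (∑ x, P2 x * Real.log (ζ * P1 x + (1 - α) * P2 x))
        + Real.log (1 - α + ζ) - Real.log (1 - α + ζ + r))) α := by
  have hβ : 0 < 1 - α + ζ := by linarith
  have hβr : 0 < 1 - α + ζ + r := by linarith
  have hu : ∀ x, 0 < ζ * P1 x + (1 - α) * P2 x :=
    fun x => add_pos (mul_pos hζ (hP1pos x)) (mul_pos h1α (hP2pos x))
  have hv : ∀ x, 0 < ζ * P1 x + (1 - α + r) * P2 x :=
    fun x => add_pos (mul_pos hζ (hP1pos x)) (mul_pos (by linarith) (hP2pos x))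
  have hid : HasDerivAt (fun α : ℝ => 1 - α) (-1) α := by
    simpa using (hasDerivAt_id α).const_sub 1
  have hs1 : HasDerivAt (fun α : ℝ => ∑ x, (ζ * P1 x + (1 - α) * P2 x) *
      Real.log (ζ * P1 x + (1 - α) * P2 x))
      (∑ x, (Real.log (ζ * P1 x + (1 - α) * P2 x) + 1) * (-1 * P2 x)) α := by
    apply HasDerivAt.fun_sum
    intro x _
    have hin : HasDerivAt (fun α : ℝ => ζ * P1 x + (1 - α) * P2 x) (-1 * P2 x) α :=
      (hid.mul_const (P2 x)).const_add (ζ * P1 x)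
    exact (Real.hasDerivAt_mul_log (hu x).ne').comp α hin
  have hs2 : HasDerivAt (fun α : ℝ => ∑ x, (ζ * P1 x + (1 - α + r) * P2 x) *
      Real.log (ζ * P1 x + (1 - α + r) * P2 x))
      (∑ x, (Real.log (ζ * P1 x + (1 - α + r) * P2 x) + 1) * (-1 * P2 x)) α := by
    apply HasDerivAt.fun_sum
    intro x _
    have hin : HasDerivAt (fun α : ℝ => ζ * P1 x + (1 - α + r) * P2 x) (-1 * P2 x) α := by
      have := ((hid.add_const r).mul_const (P2 x)).const_add (ζ * P1 x)
      simpa using this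
    exact (Real.hasDerivAt_mul_log (hv x).ne').comp α hin
  have hβd : HasDerivAt (fun α : ℝ => (1 - α + ζ) * Real.log (1 - α + ζ))
      ((Real.log (1 - α + ζ) + 1) * -1) α :=
    HasDerivAt.comp (h₂ := fun x => x * Real.log x) α (Real.hasDerivAt_mul_log hβ.ne') (hid.add_const ζ)
  have hβrd : HasDerivAt (fun α : ℝ => (1 - α + ζ + r) * Real.log (1 - α + ζ + r))
      ((Real.log (1 - α + ζ + r) + 1) * -1) α :=
    HasDerivAt.comp (h₂ := fun x => x * Real.log x) α (Real.hasDerivAt_mul_log hβr.ne') ((hid.add_const ζ).add_const r)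
  have hall := ((((hs1.sub hβd).sub hs2).add hβrd).const_mul (1/r)).add_const
    (∑ x, P2 x * Real.log (P2 x))
  have e1 : ∑ x, (Real.log (ζ * P1 x + (1 - α) * P2 x) + 1) * (-1 * P2 x)
      = -(∑ x, P2 x * Real.log (ζ * P1 x + (1 - α) * P2 x)) - 1 := by
    rw [Finset.sum_congr rfl (fun x _ => (by ring :
      (Real.log (ζ * P1 x + (1 - α) * P2 x) + 1) * (-1 * P2 x)
        = -(P2 x * Real.log (ζ * P1 x + (1 - α) * P2 x)) - P2 x)),
      Finset.sum_sub_distrib, Finset.sum_neg_distrib, hP2s]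
  have e2 : ∑ x, (Real.log (ζ * P1 x + (1 - α + r) * P2 x) + 1) * (-1 * P2 x)
      = -(∑ x, P2 x * Real.log (ζ * P1 x + (1 - α + r) * P2 x)) - 1 := by
    rw [Finset.sum_congr rfl (fun x _ => (by ring :
      (Real.log (ζ * P1 x + (1 - α + r) * P2 x) + 1) * (-1 * P2 x)
        = -(P2 x * Real.log (ζ * P1 x + (1 - α + r) * P2 x)) - P2 x)),
      Finset.sum_sub_distrib, Finset.sum_neg_distrib, hP2s]
  unfold Gf
  convert hall using 1
  case e'_4 => rfl
  case e'_5 => rfl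
  case e'_8 => rfl
  rw [e1, e2]
  ring

lemma deriv_nonneg_aux (P1 P2 : X → ℝ) (hP1pos : ∀ x, 0 < P1 x) (hP2pos : ∀ x, 0 < P2 x)
    (hP1s : ∑ x, P1 x = 1) (hP2s : ∑ x, P2 x = 1)
    {r ζ α : ℝ} (hr : 0 < r) (hζ : 0 < ζ) (h1α : 0 < 1 - α) :
    0 ≤ (1/r) * ((∑ x, P2 x * Real.log (ζ * P1 x + (1 - α + r) * P2 x))
        - (∑ x, P2 x * Real.log (ζ * P1 x + (1 - α) * P2 x))
        + Real.log (1 - α + ζ) - Real.log (1 - α + ζ + r)) := by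
  have hβ : 0 < 1 - α + ζ := by linarith
  have hβr : 0 < 1 - α + ζ + r := by linarith
  have hu : ∀ x, 0 < ζ * P1 x + (1 - α) * P2 x :=
    fun x => add_pos (mul_pos hζ (hP1pos x)) (mul_pos h1α (hP2pos x))
  have hv : ∀ x, 0 < ζ * P1 x + (1 - α + r) * P2 x :=
    fun x => add_pos (mul_pos hζ (hP1pos x)) (mul_pos (by linarith) (hP2pos x))
  have hsumu : ∑ x, (ζ * P1 x + (1 - α) * P2 x) = 1 - α + ζ := by
    rw [Finset.sum_add_distrib, ← Finset.mul_sum, ← Finset.mul_sum, hP1s, hP2s]; ring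
  apply mul_nonneg (by positivity)
  have hqpos : ∀ x : X, 0 < (ζ * P1 x + (1 - α) * P2 x) / (1 - α + ζ) :=
    fun x => div_pos (hu x) hβ
  have hqs : ∑ x, (ζ * P1 x + (1 - α) * P2 x) / (1 - α + ζ) = 1 := by
    rw [← Finset.sum_div, hsumu, div_self hβ.ne']
  have hm : ∀ x : X, (ζ * P1 x + (1 - α + r) * P2 x) / (1 - α + ζ + r)
      = ((1 - α + ζ)/(1 - α + ζ + r)) * ((ζ * P1 x + (1 - α) * P2 x) / (1 - α + ζ))
        + (1 - (1 - α + ζ)/(1 - α + ζ + r)) * P2 x := by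
    intro x
    field_simp
    ring
  have hkey := jensen_key P2 (fun x => (ζ * P1 x + (1 - α) * P2 x) / (1 - α + ζ))
    (fun x => (ζ * P1 x + (1 - α + r) * P2 x) / (1 - α + ζ + r)) hP2pos hqpos hP2s hqs
    ((1 - α + ζ)/(1 - α + ζ + r)) (by positivity)
    ((div_le_one hβr).2 (by linarith)) hm
  have l1 : ∑ x, P2 x * Real.log ((ζ * P1 x + (1 - α) * P2 x) / (1 - α + ζ))
      = (∑ x, P2 x * Real.log (ζ * P1 x + (1 - α) * P2 x)) - Real.log (1 - α + ζ) := by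
    rw [Finset.sum_congr rfl (fun x _ => by
      rw [Real.log_div (hu x).ne' hβ.ne', mul_sub]),
      Finset.sum_sub_distrib, ← Finset.sum_mul, hP2s, one_mul]
  have l2 : ∑ x, P2 x * Real.log ((ζ * P1 x + (1 - α + r) * P2 x) / (1 - α + ζ + r))
      = (∑ x, P2 x * Real.log (ζ * P1 x + (1 - α + r) * P2 x)) - Real.log (1 - α + ζ + r) := by
    rw [Finset.sum_congr rfl (fun x _ => by
      rw [Real.log_div (hv x).ne' hβr.ne', mul_sub]),
      Finset.sum_sub_distrib, ← Finset.sum_mul, hP2s, one_mul]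
  rw [l1, l2] at hkey
  linarith

/-- `g1(α) = GJS((ζ·P1 + (1−α)·P2)/(1−α+ζ), P2, (1−α+ζ)/r)` is
monotonically nondecreasing on `[θ+ζ, 1−θ]`. -/
theorem g1_monotoneOn [Nonempty X]
    (P1 P2 : X → ℝ) (hP1 : IsProbDist P1) (hP2 : IsProbDist P2)
    (hP1pos : ∀ x, 0 < P1 x) (hP2pos : ∀ x, 0 < P2 x) (hne : P1 ≠ P2)
    {r θ ζ : ℝ} (hr : 0 < r) (hθ : θ ∈ Set.Ioo (0 : ℝ) (1 / 2))
    (hζ : ζ ∈ Set.Ioo (0 : ℝ) (1 - 2 * θ)) :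
    MonotoneOn
      (fun α : ℝ =>
        GJS (fun x => (ζ * P1 x + (1 - α) * P2 x) / (1 - α + ζ)) P2 ((1 - α + ζ) / r))
      (Set.Icc (θ + ζ) (1 - θ)) := by
  obtain ⟨hP1n, hP1s⟩ := hP1
  obtain ⟨hP2n, hP2s⟩ := hP2
  obtain ⟨hθ0, hθh⟩ := hθ
  obtain ⟨hζ0, hζh⟩ := hζ
  have hmono : MonotoneOn (Gf P1 P2 r ζ) (Set.Icc (θ + ζ) (1 - θ)) := by
    apply monotoneOn_of_deriv_nonneg (convex_Icc _ _)
    · intro α hα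
      have h1α : 0 < 1 - α := by have := hα.2; linarith
      exact (hasDerivAt_Gf P1 P2 hP1pos hP2pos hr hζ0 h1α hP2s).continuousAt.continuousWithinAt
    · intro α hα
      rw [interior_Icc] at hα
      have h1α : 0 < 1 - α := by have := hα.2; linarith
      exact (hasDerivAt_Gf P1 P2 hP1pos hP2pos hr hζ0 h1α
        hP2s).differentiableAt.differentiableWithinAt
    · intro α hα
      rw [interior_Icc] at hα
      have h1α : 0 < 1 - α := by have := hα.2; linarith
      rw [(hasDerivAt_Gf P1 P2 hP1pos hP2pos hr hζ0 h1α hP2s).deriv]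
      exact deriv_nonneg_aux P1 P2 hP1pos hP2pos hP1s hP2s hr hζ0 h1α
  intro a ha b hb hab
  have h1a : 0 < 1 - a := by have := ha.2; linarith
  have h1b : 0 < 1 - b := by have := hb.2; linarith
  simp only
  rw [gjs_eq P1 P2 hP1s hP2s hP1pos hP2pos hr hζ0 h1a,
    gjs_eq P1 P2 hP1s hP2s hP1pos hP2pos hr hζ0 h1b]
  exact hmono ha hb hab

end StmtNS
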